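/- In F-ROCP (filtered robust OCP), where the threshold is updated by r_{t+1} = r_t - η g_t with the true gradient g_t = α - 1{r_t < s_t} whenever r_t ∉ [0, B), and by r_{t+1} = r_t - η ḡ_t with arbitrary ḡ_t ∈ {α, α-1} whenever r_t ∈ [0, B), starting from r_1 ∈ [0, B) with scores s_t ∈ [0,B], the empirical miscoverage satisfies |α - (1/T) Σ_{t=1}^T 1{r_t < s_t}| ≤ (B + η)/(η T) + |G̃_{0→1} - G̃_{1→0}|/T, where G̃_{0→1} and G̃_{1→0} count the directional gradient flips only over rounds with r_t ∈ [0, B). -/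

import Mathlib

/-- Theorem 2: miscoverage bound of F-ROCP, where the corrupted
gradient is used only when the threshold is in-range, and the true gradient
is used when it is out-of-range. -/
theorem frocp_miscoverage
    (B η α : ℝ) (T : ℕ) (s r g gbar : ℕ → ℝ)
    (hB : 0 < B) (hη : 0 < η) (hα : α ∈ Set.Icc (0 : ℝ) 1) (hT : 1 ≤ T)
    (hs : ∀ t, s t ∈ Set.Icc (0 : ℝ) B)
    (hg : ∀ t, g t = α - (if r t < s t then (1 : ℝ) else 0))
    (hgbar : ∀ t, gbar t = α ∨ gbar t = α - 1)
    (hr1 : 0 ≤ r 1 ∧ r 1 < B)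
    (hrec : ∀ t, 1 ≤ t →
      r (t + 1) = if 0 ≤ r t ∧ r t < B then r t - η * gbar t else r t - η * g t) :
    |α - (1 / (T : ℝ)) * ∑ t ∈ Finset.Icc 1 T, (if r t < s t then (1 : ℝ) else 0)|
      ≤ (B + η) / (η * T)
        + |(((Finset.Icc 1 T).filter
              (fun u => (0 ≤ r u ∧ r u < B) ∧ g u - gbar u = 1)).card : ℝ)
            - (((Finset.Icc 1 T).filter
              (fun u => (0 ≤ r u ∧ r u < B) ∧ g u - gbar u = -1)).card : ℝ)| / T := by
  obtain ⟨hα0, hα1⟩ := hα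
  obtain ⟨hr1l, hr1u⟩ := hr1
  have hT0 : (0:ℝ) < T := by exact_mod_cast Nat.lt_of_lt_of_le Nat.zero_lt_one hT
  -- invariant
  have hinv : ∀ t, 1 ≤ t → -η ≤ r t ∧ r t < B + η := by
    intro t ht
    induction t with
    | zero => omega
    | succ n ih =>
      rcases Nat.eq_zero_or_pos n with rfl | hn
      · exact ⟨by linarith, by linarith⟩
      · obtain ⟨ihl, ihu⟩ := ih hn
        have hrn := hrec n hn
        by_cases hP : 0 ≤ r n ∧ r n < B
        · rw [if_pos hP] at hrn
          rcases hgbar n with h | h <;> rw [h] at hrn <;>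
            exact ⟨by nlinarith [hP.1, hP.2], by nlinarith [hP.1, hP.2]⟩
        · rw [if_neg hP, hg n] at hrn
          rcases not_and_or.mp hP with h | h
          · push_neg at h
            have hb : r n < s n := lt_of_lt_of_le h (hs n).1
            rw [if_pos hb] at hrn
            exact ⟨by nlinarith, by nlinarith⟩
          · push_neg at h
            have hb : ¬ r n < s n := not_lt.mpr (le_trans (hs n).2 h)
            rw [if_neg hb] at hrn
            exact ⟨by nlinarith, by nlinarith⟩
  -- telescoping
  have htel : ∀ n : ℕ, ∑ t ∈ Finset.Icc 1 n,
      (η * (if 0 ≤ r t ∧ r t < B then gbar t else g t)) = r 1 - r (n+1) := by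
    intro n
    induction n with
    | zero => simp
    | succ m ih =>
      rw [Finset.sum_Icc_succ_top (by omega : 1 ≤ m+1), ih]
      have hrm := hrec (m+1) (by omega)
      by_cases hP : 0 ≤ r (m+1) ∧ r (m+1) < B
      · rw [if_pos hP] at hrm ⊢; rw [hrm]; ring
      · rw [if_neg hP] at hrm ⊢; rw [hrm]; ring
  have htelT := htel T
  set S := Finset.Icc 1 T with hS
  -- sum of true gradients
  have hcard : (S.card : ℝ) = T := by
    rw [hS, Nat.card_Icc, Nat.add_sub_cancel]
  have hsumg : ∑ t ∈ S, g t
      = T * α - ∑ t ∈ S, (if r t < s t then (1:ℝ) else 0) := by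
    rw [← hcard]
    rw [Finset.sum_congr rfl (fun t _ => hg t), Finset.sum_sub_distrib]
    simp [mul_comm]
  -- split off the corruption
  have hsplit : ∑ t ∈ S, (η * (if 0 ≤ r t ∧ r t < B then gbar t else g t))
      = η * (∑ t ∈ S, g t - ∑ t ∈ S.filter (fun t => 0 ≤ r t ∧ r t < B), (g t - gbar t)) := by
    rw [Finset.sum_filter, mul_sub, Finset.mul_sum, Finset.mul_sum, ← Finset.sum_sub_distrib]
    apply Finset.sum_congr rfl
    intro t _
    by_cases hP : 0 ≤ r t ∧ r t < B
    · rw [if_pos hP, if_pos hP]; ring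
    · rw [if_neg hP, if_neg hP]; ring
  -- the corruption sum equals C1 - C2
  have hdelta : ∀ t, g t - gbar t = (if g t - gbar t = 1 then (1:ℝ) else 0)
      - (if g t - gbar t = -1 then (1:ℝ) else 0) := by
    intro t
    rcases hgbar t with h | h <;> rw [hg t, h] <;> by_cases hb : r t < s t <;>
      simp [hb] <;> norm_num
  have hC : ∑ t ∈ S.filter (fun t => 0 ≤ r t ∧ r t < B), (g t - gbar t)
      = ((S.filter (fun u => (0 ≤ r u ∧ r u < B) ∧ g u - gbar u = 1)).card : ℝ)
        - ((S.filter (fun u => (0 ≤ r u ∧ r u < B) ∧ g u - gbar u = -1)).card : ℝ) := by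
    rw [Finset.sum_congr rfl (fun t _ => hdelta t), Finset.sum_sub_distrib]
    rw [Finset.sum_boole, Finset.sum_boole, Finset.filter_filter, Finset.filter_filter]
  set C1 : ℝ := ((S.filter (fun u => (0 ≤ r u ∧ r u < B) ∧ g u - gbar u = 1)).card : ℝ)
  set C2 : ℝ := ((S.filter (fun u => (0 ≤ r u ∧ r u < B) ∧ g u - gbar u = -1)).card : ℝ)
  set A : ℝ := ∑ t ∈ S, (if r t < s t then (1:ℝ) else 0)
  -- main identity
  have hkey : η * (T * α - A - (C1 - C2)) = r 1 - r (T+1) := by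
    rw [← htelT, hsplit, hsumg, hC]
  have hRb := hinv (T+1) (by omega)
  have hbound : |r 1 - r (T+1)| ≤ B + η := by
    rw [abs_le]; constructor <;> [nlinarith [hRb.2]; nlinarith [hRb.1]]
  have hident : α - (1 / (T:ℝ)) * A = (r 1 - r (T+1)) / (η * T) + (C1 - C2) / T := by
    rw [← hkey]
    field_simp
    ring
  rw [hident]
  refine le_trans (abs_add_le _ _) (add_le_add ?_ ?_)
  · rw [abs_div, abs_of_pos (by positivity : (0:ℝ) < η * T)]
    exact div_le_div_of_nonneg_right hbound (by positivity)
  · rw [abs_div, abs_of_pos hT0]
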